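/- Let Λ be a finite dimensional algebra over a field k. Then the lattice of torsion classes of Λ (ordered by inclusion) is meet-semidistributive: if 𝒯_1, 𝒯_2, 𝒯_3 are torsion classes with 𝒯_1 ∧ 𝒯_3 = 𝒯_2 ∧ 𝒯_3, then (𝒯_1 ∨ 𝒯_2) ∧ 𝒯_3 = 𝒯_1 ∧ 𝒯_3. -/

import Mathlib

open CategoryTheory

universe u

/-- A torsion class in `Λ`-mod (finite-dimensional modules): a class of
finite-dimensional modules containing the zero modules and closed under
quotients and extensions. -/
def IsTorsionClass (Λ : Type u) [Ring Λ] (T : Set (ModuleCat.{u} Λ)) : Prop :=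
  T ⊆ {X | Module.Finite Λ X} ∧
  (∀ X : ModuleCat.{u} Λ, Module.Finite Λ X → Subsingleton X → X ∈ T) ∧
  (∀ X Y : ModuleCat.{u} Λ, X ∈ T → ∀ f : X ⟶ Y, Function.Surjective f → Y ∈ T) ∧
  (∀ (X : ModuleCat.{u} Λ) (N : Submodule Λ X), Module.Finite Λ X →
    ModuleCat.of Λ N ∈ T → ModuleCat.of Λ (X ⧸ N) ∈ T → X ∈ T)

/-- The join of two torsion classes: the smallest torsion class containing both. -/
def torsJoin (Λ : Type u) [Ring Λ] (T U : Set (ModuleCat.{u} Λ)) : Set (ModuleCat.{u} Λ) :=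
  ⋂₀ {V | IsTorsionClass Λ V ∧ T ⊆ V ∧ U ⊆ V}

section Aux

variable {Λ : Type u} [Ring Λ]

/-- The auxiliary class `W`: finite modules all of whose nonzero quotients contain a
nonzero submodule lying in `T₁` or `T₂`. -/
def auxW (Λ : Type u) [Ring Λ] (T₁ T₂ : Set (ModuleCat.{u} Λ)) : Set (ModuleCat.{u} Λ) :=
  {M | Module.Finite Λ M ∧ ∀ (Y : ModuleCat.{u} Λ) (f : M ⟶ Y), Function.Surjective f →
    ¬ Subsingleton Y →
    ∃ S : Submodule Λ Y, S ≠ ⊥ ∧ (ModuleCat.of Λ S ∈ T₁ ∨ ModuleCat.of Λ S ∈ T₂)}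

lemma auxW_isTorsionClass (T₁ T₂ : Set (ModuleCat.{u} Λ))
    (h₁ : IsTorsionClass Λ T₁) (h₂ : IsTorsionClass Λ T₂) :
    IsTorsionClass Λ (auxW Λ T₁ T₂) := by
  refine ⟨fun M hM => hM.1, ?_, ?_, ?_⟩
  · -- zero modules
    intro X hfin hs
    refine ⟨hfin, fun Y f hf hns => absurd (hf.subsingleton) hns⟩
  · -- quotients
    intro X Y hX f hf
    haveI : Module.Finite Λ X := hX.1
    refine ⟨Module.Finite.of_surjective (f.hom : X →ₗ[Λ] Y) hf, fun Z g hg hns => ?_⟩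
    exact hX.2 Z (f ≫ g) (hg.comp hf) hns
  · -- extensions
    intro X N hfin hN hQ
    refine ⟨hfin, fun Y f hf hns => ?_⟩
    by_cases hS₀ : Submodule.map (f.hom : X →ₗ[Λ] Y) N = ⊥
    · -- `N` maps to zero, so `Y` is a quotient of `X ⧸ N`
      have hle : N ≤ LinearMap.ker (f.hom : X →ₗ[Λ] Y) := by
        intro x hx
        have : f x ∈ Submodule.map (f.hom : X →ₗ[Λ] Y) N := ⟨x, hx, rfl⟩
        rw [hS₀] at this
        simpa using this
      let g : ModuleCat.of Λ (X ⧸ N) ⟶ Y := ModuleCat.ofHom (N.liftQ (f.hom : X →ₗ[Λ] Y) hle)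
      have hg : Function.Surjective g := by
        intro y
        obtain ⟨x, rfl⟩ := hf y
        exact ⟨Submodule.Quotient.mk x, Submodule.liftQ_apply N (f.hom : X →ₗ[Λ] Y) x⟩
      exact hQ.2 Y g hg hns
    · -- the image of `N` is nonzero; use that `N ∈ W`
      set S₀ := Submodule.map (f.hom : X →ₗ[Λ] Y) N with hS₀def
      have hns' : ¬ Subsingleton (ModuleCat.of Λ S₀) := by
        intro hsub
        haveI : Subsingleton ↥S₀ := hsub
        apply hS₀
        rw [Submodule.eq_bot_iff]
        intro y hy
        have : (⟨y, hy⟩ : S₀) = (⟨0, S₀.zero_mem⟩ : S₀) := Subsingleton.elim _ _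
        exact congrArg Subtype.val this
      let f₁ : ModuleCat.of Λ N ⟶ ModuleCat.of Λ S₀ :=
        ModuleCat.ofHom (LinearMap.codRestrict S₀ ((f.hom : X →ₗ[Λ] Y).comp N.subtype)
          (fun c => ⟨c.1, c.2, rfl⟩))
      have hf₁ : Function.Surjective f₁ := by
        rintro ⟨y, hy⟩
        obtain ⟨x, hxN, hfx⟩ := hy
        exact ⟨⟨x, hxN⟩, Subtype.ext hfx⟩
      obtain ⟨P, hPne, hP12⟩ := hN.2 (ModuleCat.of Λ S₀) f₁ hf₁ hns'
      refine ⟨P.map S₀.subtype, ?_, ?_⟩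
      · obtain ⟨p, hpP, hp0⟩ := P.ne_bot_iff.mp hPne
        refine Submodule.ne_bot_iff _ |>.mpr ⟨S₀.subtype p, ⟨p, hpP, rfl⟩, ?_⟩
        exact fun h0 => hp0 (Subtype.ext h0)
      · let emor : ModuleCat.of Λ P ⟶ ModuleCat.of Λ (P.map S₀.subtype) :=
          ModuleCat.ofHom (LinearMap.codRestrict _ (S₀.subtype.comp P.subtype)
            (fun c => ⟨c, c.2, rfl⟩))
        have hemor : Function.Surjective emor := by
          rintro ⟨y, hy⟩
          obtain ⟨p, hpP, rfl⟩ := hy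
          exact ⟨⟨p, hpP⟩, Subtype.ext rfl⟩
        rcases hP12 with hP | hP
        · exact Or.inl (h₁.2.2.1 _ _ hP emor hemor)
        · exact Or.inr (h₂.2.2.1 _ _ hP emor hemor)

lemma subset_auxW_left (T₁ T₂ : Set (ModuleCat.{u} Λ)) (h₁ : IsTorsionClass Λ T₁) :
    T₁ ⊆ auxW Λ T₁ T₂ := by
  intro X hX
  refine ⟨h₁.1 hX, fun Y f hf hns => ?_⟩
  have hY : Y ∈ T₁ := h₁.2.2.1 X Y hX f hf
  haveI : Nontrivial Y := not_subsingleton_iff_nontrivial.mp hns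
  refine ⟨⊤, ?_, Or.inl ?_⟩
  · intro hbt
    obtain ⟨y, hy⟩ := exists_ne (0 : Y)
    apply hy
    have hmem : y ∈ (⊥ : Submodule Λ Y) := hbt ▸ Submodule.mem_top
    simpa using hmem
  · let emor : Y ⟶ ModuleCat.of Λ (⊤ : Submodule Λ Y) :=
      ModuleCat.ofHom (LinearMap.codRestrict _ LinearMap.id (fun c => Submodule.mem_top))
    have hemor : Function.Surjective emor := by
      rintro ⟨y, _⟩
      exact ⟨y, Subtype.ext rfl⟩
    exact h₁.2.2.1 Y (ModuleCat.of Λ (⊤ : Submodule Λ Y)) hY emor hemor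

end Aux

/-- The lattice of torsion classes of a finite-dimensional algebra `Λ`
over a field `k` is meet-semidistributive: if `𝒯₁ ∧ 𝒯₃ = 𝒯₂ ∧ 𝒯₃` then
`(𝒯₁ ∨ 𝒯₂) ∧ 𝒯₃ = 𝒯₁ ∧ 𝒯₃` (meet is intersection, join is `torsJoin`). -/
theorem stmt5 (k : Type u) [Field k] (Λ : Type u) [Ring Λ] [Algebra k Λ]
    [FiniteDimensional k Λ] (T₁ T₂ T₃ : Set (ModuleCat.{u} Λ))
    (h₁ : IsTorsionClass Λ T₁) (h₂ : IsTorsionClass Λ T₂) (h₃ : IsTorsionClass Λ T₃)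
    (h : T₁ ∩ T₃ = T₂ ∩ T₃) :
    torsJoin Λ T₁ T₂ ∩ T₃ = T₁ ∩ T₃ := by
  have hWtc := auxW_isTorsionClass T₁ T₂ h₁ h₂
  have hW1 := subset_auxW_left T₁ T₂ h₁
  have hW2 : T₂ ⊆ auxW Λ T₁ T₂ := by
    intro X hX
    obtain ⟨hfin, hcond⟩ := subset_auxW_left T₂ T₁ h₂ hX
    exact ⟨hfin, fun Y f hf hns => by
      obtain ⟨S, hSne, hS⟩ := hcond Y f hf hns
      exact ⟨S, hSne, hS.symm⟩⟩
  have hWmem : auxW Λ T₁ T₂ ∈ {V | IsTorsionClass Λ V ∧ T₁ ⊆ V ∧ T₂ ⊆ V} :=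
    ⟨hWtc, hW1, hW2⟩
  haveI : IsNoetherianRing Λ :=
    isNoetherianRing_iff.mpr (isNoetherian_of_tower k inferInstance)
  have main : ∀ X : ModuleCat.{u} Λ, X ∈ torsJoin Λ T₁ T₂ → X ∈ T₃ → X ∈ T₁ := by
    intro X hXJ hX3
    have hXW : X ∈ auxW Λ T₁ T₂ := hXJ _ hWmem
    haveI hXfin : Module.Finite Λ X := hXW.1
    haveI : IsNoetherian Λ X := isNoetherian_of_isNoetherianRing_of_finite Λ X
    have wf : WellFounded ((· > ·) : Submodule Λ X → Submodule Λ X → Prop) :=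
      (inferInstance : WellFoundedGT (Submodule Λ X)).wf
    have key : ∀ N : Submodule Λ X, ∀ (Y : ModuleCat.{u} Λ) (f : X ⟶ Y),
        Function.Surjective f → LinearMap.ker (f.hom : X →ₗ[Λ] Y) = N → Y ∈ T₃ → Y ∈ T₁ := by
      intro N
      induction N using WellFounded.induction wf with
      | _ N IH => ?_
      intro Y f hf hker hY3
      haveI hYfin : Module.Finite Λ Y := Module.Finite.of_surjective (f.hom : X →ₗ[Λ] Y) hf
      by_cases hs : Subsingleton Y
      · exact h₁.2.1 Y hYfin hs
      obtain ⟨S, hSne, hS12⟩ := hXW.2 Y f hf hs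
      let g : Y ⟶ ModuleCat.of Λ (Y ⧸ S) := ModuleCat.ofHom S.mkQ
      have hg : Function.Surjective g := S.mkQ_surjective
      have hY'3 : ModuleCat.of Λ (Y ⧸ S) ∈ T₃ := h₃.2.2.1 Y _ hY3 g hg
      let f' : X ⟶ ModuleCat.of Λ (Y ⧸ S) := f ≫ g
      have hf' : Function.Surjective f' := hg.comp hf
      have hker' : LinearMap.ker (f'.hom : X →ₗ[Λ] (Y ⧸ S))
          = Submodule.comap (f.hom : X →ₗ[Λ] Y) S := by
        have hcomp : (f'.hom : X →ₗ[Λ] (Y ⧸ S)) = (S.mkQ).comp (f.hom : X →ₗ[Λ] Y) := rfl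
        rw [hcomp, LinearMap.ker_comp, Submodule.ker_mkQ]
      have hle : N ≤ Submodule.comap (f.hom : X →ₗ[Λ] Y) S := by
        rw [← hker]
        intro x hx
        have hx0 : f x = 0 := hx
        show f x ∈ S
        rw [hx0]; exact S.zero_mem
      have hlt : N < Submodule.comap (f.hom : X →ₗ[Λ] Y) S := by
        refine lt_of_le_of_ne hle (fun heq => hSne ?_)
        rw [← Submodule.map_comap_eq_of_surjective hf S, ← heq, ← hker]
        refine (Submodule.eq_bot_iff _).mpr ?_
        rintro y ⟨x, hx, rfl⟩
        exact hx
      have hY'1 : ModuleCat.of Λ (Y ⧸ S) ∈ T₁ :=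
        IH (Submodule.comap (f.hom : X →ₗ[Λ] Y) S) hlt (ModuleCat.of Λ (Y ⧸ S)) f' hf' hker' hY'3
      rcases hS12 with hS | hS
      · exact h₁.2.2.2 Y S hYfin hS hY'1
      · have hY'2 : ModuleCat.of Λ (Y ⧸ S) ∈ T₂ :=
          ((Set.ext_iff.mp h _).mp ⟨hY'1, hY'3⟩).1
        have hY2 : Y ∈ T₂ := h₂.2.2.2 Y S hYfin hS hY'2
        exact ((Set.ext_iff.mp h Y).mpr ⟨hY2, hY3⟩).1
    exact key ⊥ X (𝟙 X) Function.surjective_id LinearMap.ker_id hX3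
  apply Set.Subset.antisymm
  · rintro X ⟨hXJ, hX3⟩
    exact ⟨main X hXJ hX3, hX3⟩
  · rintro X ⟨hX1, hX3⟩
    exact ⟨fun V hV => hV.2.1 hX1, hX3⟩
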